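/- Let d ∈ ℕ and σ > 0. Let ω be a random vector in ℝ^d with distribution N(0, σ⁻² I_d) and let b be uniformly distributed on [0, 2π], independent of ω. Then for all u, v ∈ ℝ^d, E[ 2 cos(⟨ω, u⟩ + b) cos(⟨ω, v⟩ + b) ] = exp(−‖u − v‖² / (2σ²)). -/

import Mathlib

open MeasureTheory Real
open scoped RealInnerProductSpace ENNReal

noncomputable section

/-- Density of the Gaussian measure N(0, σ⁻² I_d) on ℝ^d. -/
def gaussPdf (d : ℕ) (σ : ℝ) (ω : EuclideanSpace ℝ (Fin d)) : ℝ :=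
  (σ ^ 2 / (2 * π)) ^ ((d : ℝ) / 2) * Real.exp (-(σ ^ 2) * ‖ω‖ ^ 2 / 2)

/-- The Gaussian measure N(0, σ⁻² I_d) on ℝ^d. -/
def gaussMeasure (d : ℕ) (σ : ℝ) : Measure (EuclideanSpace ℝ (Fin d)) :=
  volume.withDensity fun ω => ENNReal.ofReal (gaussPdf d σ ω)

/-- The uniform distribution on [0, 2π]. -/
def unifAngle : Measure ℝ :=
  (ENNReal.ofReal (2 * π))⁻¹ • volume.restrict (Set.Icc (0 : ℝ) (2 * π))

lemma unif_integral_cos (a c : ℝ) :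
    (∫ b, 2 * Real.cos (a + b) * Real.cos (c + b) ∂unifAngle) = Real.cos (a - c) := by
  have h2π : (0 : ℝ) < 2 * π := by positivity
  have hkey : ∀ b : ℝ, 2 * Real.cos (a + b) * Real.cos (c + b)
      = Real.cos (a - c) + Real.cos ((a + c) + 2 * b) := by
    intro b
    have h1 : Real.cos ((a + c) + 2 * b) = Real.cos ((a + b) + (c + b)) := by ring_nf
    have h2 : Real.cos (a - c) = Real.cos ((a + b) - (c + b)) := by ring_nf
    rw [h1, h2, Real.cos_add (a + b) (c + b), Real.cos_sub (a + b) (c + b)]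
    ring
  rw [unifAngle, integral_smul_measure]
  simp only [hkey]
  rw [integral_Icc_eq_integral_Ioc, ← intervalIntegral.integral_of_le h2π.le]
  have hint1 : IntervalIntegrable (fun _ : ℝ => Real.cos (a - c)) volume 0 (2 * π) :=
    intervalIntegrable_const
  have hint2 : IntervalIntegrable (fun b : ℝ => Real.cos ((a + c) + 2 * b)) volume 0 (2 * π) :=
    (Real.continuous_cos.comp (by continuity)).intervalIntegrable _ _
  rw [intervalIntegral.integral_add hint1 hint2]
  have h3 : (∫ b in (0:ℝ)..(2*π), Real.cos ((a + c) + 2 * b)) = 0 := by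
    have key := intervalIntegral.integral_comp_mul_add (a := (0:ℝ)) (b := 2*π)
      (f := Real.cos) (two_ne_zero) (a + c)
    simp only [mul_zero, zero_add] at key
    have heq : ∀ b : ℝ, Real.cos ((a + c) + 2 * b) = Real.cos (2 * b + (a + c)) := by
      intro b; ring_nf
    simp only [heq]
    rw [key, integral_cos, smul_eq_mul]
    have h4 : 2 * (2 * π) + (a + c) = (a + c) + 2 * π + 2 * π := by ring
    rw [h4, Real.sin_add_two_pi, Real.sin_add_two_pi]
    simp
  rw [h3, intervalIntegral.integral_const, add_zero]
  rw [ENNReal.toReal_inv, ENNReal.toReal_ofReal h2π.le]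
  simp only [smul_eq_mul, sub_zero]
  field_simp

open Complex in
lemma gauss_integral_cos (d : ℕ) (σ : ℝ) (hσ : 0 < σ) (t : EuclideanSpace ℝ (Fin d)) :
    (∫ ω, Real.cos ⟪ω, t⟫ ∂(gaussMeasure d σ)) = Real.exp (-‖t‖ ^ 2 / (2 * σ ^ 2)) := by
  set b : ℝ := σ ^ 2 / 2 with hb_def
  have hb : (0:ℝ) < b := by positivity
  have hbC : (0:ℝ) < ((b : ℂ)).re := by simpa using hb
  set N : ℝ := (σ ^ 2 / (2 * π)) ^ ((d : ℝ) / 2) with hN_def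
  have hpdf_nonneg : ∀ ω, 0 ≤ gaussPdf d σ ω := by
    intro ω; unfold gaussPdf; positivity
  rw [gaussMeasure]
  rw [show (fun ω => ENNReal.ofReal (gaussPdf d σ ω))
      = fun ω => ((gaussPdf d σ ω).toNNReal : ℝ≥0∞) from rfl]
  rw [integral_withDensity_eq_integral_smul (by
      apply Measurable.real_toNNReal
      unfold gaussPdf
      fun_prop)]
  simp only [NNReal.smul_def, Real.coe_toNNReal', smul_eq_mul]
  have hmax : ∀ ω : EuclideanSpace ℝ (Fin d),
      max (gaussPdf d σ ω) 0 = gaussPdf d σ ω := fun ω => max_eq_left (hpdf_nonneg ω)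
  simp only [hmax]
  have hre : ∀ ω : EuclideanSpace ℝ (Fin d),
      gaussPdf d σ ω * Real.cos ⟪ω, t⟫ =
        N * (cexp (-(b:ℂ) * (‖ω‖:ℂ) ^ 2 + Complex.I * (⟪t, ω⟫ : ℝ))).re := by
    intro ω
    have hx : cexp (-(b:ℂ) * (‖ω‖:ℂ) ^ 2 + Complex.I * (⟪t, ω⟫ : ℝ))
        = ((Real.exp (-b * ‖ω‖ ^ 2) : ℝ) : ℂ) *
            ((Real.cos ⟪t, ω⟫ : ℝ) + (Real.sin ⟪t, ω⟫ : ℝ) * Complex.I) := by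
      rw [Complex.exp_add, mul_comm Complex.I, Complex.exp_mul_I]
      norm_cast
    rw [hx]
    simp only [Complex.add_re, Complex.mul_re, Complex.ofReal_re, Complex.ofReal_im,
      Complex.add_im, Complex.mul_im, Complex.I_re, Complex.I_im]
    unfold gaussPdf
    rw [real_inner_comm t ω, hN_def]
    simp
    rw [hb_def]
    ring_nf
  simp only [hre]
  rw [integral_const_mul]
  have hint := GaussianFourier.integrable_cexp_neg_mul_sq_norm_add (V := EuclideanSpace ℝ (Fin d))
      hbC Complex.I t
  have hcomm : (∫ ω : EuclideanSpace ℝ (Fin d),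
      (cexp (-(b:ℂ) * (‖ω‖:ℂ) ^ 2 + Complex.I * (⟪t, ω⟫ : ℝ))).re)
      = (∫ ω : EuclideanSpace ℝ (Fin d),
          cexp (-(b:ℂ) * (‖ω‖:ℂ) ^ 2 + Complex.I * (⟪t, ω⟫ : ℝ))).re := by
    exact Complex.reCLM.integral_comp_comm hint
  rw [hcomm, GaussianFourier.integral_cexp_neg_mul_sq_norm_add hbC Complex.I t]
  have hfin : (Module.finrank ℝ (EuclideanSpace ℝ (Fin d)) : ℂ) = (d : ℂ) := by
    simp [finrank_euclideanSpace]
  have hpow : ((π : ℂ) / (b : ℂ)) ^ ((Module.finrank ℝ (EuclideanSpace ℝ (Fin d)) : ℂ) / 2)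
      = (((π / b) ^ ((d : ℝ) / 2) : ℝ) : ℂ) := by
    rw [hfin, ← Complex.ofReal_div, Complex.ofReal_cpow (by positivity)]
    norm_num
  have hσ2 : σ ^ 2 ≠ 0 := by positivity
  have hexp : cexp (Complex.I ^ 2 * (‖t‖:ℂ) ^ 2 / (4 * (b:ℂ)))
      = ((Real.exp (-‖t‖ ^ 2 / (2 * σ ^ 2)) : ℝ) : ℂ) := by
    rw [Complex.I_sq, show (-1 * (‖t‖:ℂ) ^ 2 / (4 * (b:ℂ)))
        = ((-‖t‖ ^ 2 / (2 * σ ^ 2) : ℝ) : ℂ) from by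
      push_cast [hb_def]
      have : (σ:ℂ) ^ 2 ≠ 0 := by exact_mod_cast hσ2
      field_simp
      ring]
    exact (Complex.ofReal_exp _).symm
  rw [show ((Module.finrank ℝ (EuclideanSpace ℝ (Fin d))) / 2 : ℂ)
      = ((Module.finrank ℝ (EuclideanSpace ℝ (Fin d)) : ℂ) / 2) from by norm_num, hpow, hexp]
  rw [← Complex.ofReal_mul, Complex.ofReal_re]
  rw [← mul_assoc, hN_def]
  rw [← Real.mul_rpow (by positivity) (by positivity)]
  rw [show σ ^ 2 / (2 * π) * (π / b) = 1 from by rw [hb_def]; field_simp]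
  rw [Real.one_rpow, one_mul]

/-- For `ω ∼ N(0, σ⁻² I_d)` and `b ∼ Unif[0, 2π]` independent,
`E[2 cos(⟨ω,u⟩ + b) cos(⟨ω,v⟩ + b)] = exp(−‖u − v‖²/(2σ²))`. -/
theorem random_fourier_feature_unbiased
    (d : ℕ) (σ : ℝ) (hσ : 0 < σ) (u v : EuclideanSpace ℝ (Fin d)) :
    (∫ ω, ∫ b, 2 * Real.cos (⟪ω, u⟫ + b) * Real.cos (⟪ω, v⟫ + b)
        ∂unifAngle ∂(gaussMeasure d σ)) =
      Real.exp (-‖u - v‖ ^ 2 / (2 * σ ^ 2)) := by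
  have h1 : ∀ ω : EuclideanSpace ℝ (Fin d),
      (∫ b, 2 * Real.cos (⟪ω, u⟫ + b) * Real.cos (⟪ω, v⟫ + b) ∂unifAngle)
        = Real.cos ⟪ω, u - v⟫ := by
    intro ω
    rw [unif_integral_cos, inner_sub_right]
  simp only [h1]
  exact gauss_integral_cos d σ hσ (u - v)

end
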